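/- The atoms of the tensor product A ⊗ B of two join-semilattices with zero are exactly the pure tensors a ⊗ b where a is an atom of A and b is an atom of B. -/
import Mathlib


variable {A B : Type*} [SemilatticeSup A] [OrderBot A] [SemilatticeSup B] [OrderBot B]

/-- A bi-ideal of `A × B`: a downward closed subset containing
`∇ = (A × {0}) ∪ ({0} × B)` that is closed under lateral joins. -/
def IsBiIdeal (I : Set (A × B)) : Prop :=
  (∀ ⦃p q : A × B⦄, q ≤ p → p ∈ I → q ∈ I) ∧
  (∀ a : A, (a, (⊥ : B)) ∈ I) ∧
  (∀ b : B, ((⊥ : A), b) ∈ I) ∧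
  (∀ a₀ a₁ : A, ∀ b : B, (a₀, b) ∈ I → (a₁, b) ∈ I → (a₀ ⊔ a₁, b) ∈ I) ∧
  (∀ a : A, ∀ b₀ b₁ : B, (a, b₀) ∈ I → (a, b₁) ∈ I → (a, b₀ ⊔ b₁) ∈ I)

/-- `∇ = (A × {0}) ∪ ({0} × B)`, the least bi-ideal. -/
def nabla (A B : Type*) [SemilatticeSup A] [OrderBot A] [SemilatticeSup B] [OrderBot B] :
    Set (A × B) := {p | p.1 = ⊥ ∨ p.2 = ⊥}

/-- The pure tensor `a ⊗ b`. -/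
def pureTensor (a : A) (b : B) : Set (A × B) :=
  nabla A B ∪ {p | p.1 ≤ a ∧ p.2 ≤ b}

/-- The bi-ideal generated by a subset `X` of `A × B`. -/
def biGen (X : Set (A × B)) : Set (A × B) := ⋂₀ {K | IsBiIdeal K ∧ X ⊆ K}

/-- The join of two bi-ideals in the lattice of bi-ideals. -/
def biSup (I J : Set (A × B)) : Set (A × B) := biGen (I ∪ J)

/-- Elements of the tensor product `A ⊗ B`: the compact (finitely generated) bi-ideals. -/
def IsTensorElt (I : Set (A × B)) : Prop := ∃ S : Finset (A × B), I = biGen ↑S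

section Aux
variable {A B : Type*} [SemilatticeSup A] [OrderBot A] [SemilatticeSup B] [OrderBot B]

lemma biGen_isBiIdeal (X : Set (A × B)) : IsBiIdeal (biGen X) := by
  refine ⟨?_, ?_, ?_, ?_, ?_⟩
  · intro p q hqp hp K hK
    exact hK.1.1 hqp (hp K hK)
  · intro a K hK; exact hK.1.2.1 a
  · intro b K hK; exact hK.1.2.2.1 b
  · intro a₀ a₁ b h0 h1 K hK
    exact hK.1.2.2.2.1 a₀ a₁ b (h0 K hK) (h1 K hK)
  · intro a b₀ b₁ h0 h1 K hK
    exact hK.1.2.2.2.2 a b₀ b₁ (h0 K hK) (h1 K hK)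

lemma subset_biGen (X : Set (A × B)) : X ⊆ biGen X :=
  fun p hp K hK => hK.2 hp

lemma biGen_subset {X K : Set (A × B)} (hK : IsBiIdeal K) (hXK : X ⊆ K) :
    biGen X ⊆ K := fun p hp => hp K ⟨hK, hXK⟩

lemma nabla_subset {K : Set (A × B)} (hK : IsBiIdeal K) : nabla A B ⊆ K := by
  rintro ⟨x, y⟩ (h | h)
  · simp only [nabla, Set.mem_setOf_eq] at h
    subst h; exact hK.2.2.1 y
  · dsimp [nabla] at h; subst h; exact hK.2.1 x

lemma nabla_isBiIdeal : IsBiIdeal (nabla A B) := by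
  refine ⟨?_, fun a => Or.inr rfl, fun b => Or.inl rfl, ?_, ?_⟩
  · rintro ⟨p1, p2⟩ ⟨q1, q2⟩ ⟨h1, h2⟩ (h | h)
    · exact Or.inl (le_bot_iff.mp (h ▸ h1))
    · exact Or.inr (le_bot_iff.mp (h ▸ h2))
  · rintro a₀ a₁ b (h | h) (h' | h')
    · exact Or.inl (by dsimp at *; simp [h, h'])
    · exact Or.inr h'
    · exact Or.inr h
    · exact Or.inr h
  · rintro a b₀ b₁ (h | h) (h' | h')
    · exact Or.inl h
    · exact Or.inl h
    · exact Or.inl h'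
    · exact Or.inr (by dsimp at *; simp [h, h'])

lemma nabla_tensorElt : IsTensorElt (nabla A B) := by
  refine ⟨∅, subset_antisymm ?_ ?_⟩
  · exact nabla_subset (biGen_isBiIdeal _)
  · exact biGen_subset nabla_isBiIdeal (by simp)

lemma pureTensor_isBiIdeal (a : A) (b : B) : IsBiIdeal (pureTensor a b) := by
  refine ⟨?_, fun x => Or.inl (Or.inr rfl), fun y => Or.inl (Or.inl rfl), ?_, ?_⟩
  · rintro ⟨p1, p2⟩ ⟨q1, q2⟩ ⟨h1, h2⟩ ((h | h) | ⟨ha, hb⟩)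
    · exact Or.inl (Or.inl (le_bot_iff.mp (h ▸ h1)))
    · exact Or.inl (Or.inr (le_bot_iff.mp (h ▸ h2)))
    · exact Or.inr ⟨le_trans h1 ha, le_trans h2 hb⟩
  · rintro a₀ a₁ y ((h | h) | ⟨ha, hb⟩) ((h' | h') | ⟨ha', hb'⟩)
    · exact Or.inl (Or.inl (by dsimp at *; simp [h, h']))
    · exact Or.inl (Or.inr h')
    · exact Or.inr ⟨by dsimp at *; simp [h, ha'], hb'⟩
    · exact Or.inl (Or.inr h)
    · exact Or.inl (Or.inr h)
    · exact Or.inl (Or.inr h)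
    · exact Or.inr ⟨by dsimp at *; simp [h', ha], hb⟩
    · exact Or.inl (Or.inr h')
    · exact Or.inr ⟨sup_le ha ha', hb⟩
  · rintro x b₀ b₁ ((h | h) | ⟨ha, hb⟩) ((h' | h') | ⟨ha', hb'⟩)
    · exact Or.inl (Or.inl h)
    · exact Or.inl (Or.inl h)
    · exact Or.inl (Or.inl h)
    · exact Or.inl (Or.inl h')
    · exact Or.inl (Or.inr (by simp [show b₀ = ⊥ from h, show b₁ = ⊥ from h']))
    · exact Or.inr ⟨ha', by simp [show b₀ = ⊥ from h, hb']⟩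
    · exact Or.inl (Or.inl h')
    · exact Or.inr ⟨ha, by simp [show b₁ = ⊥ from h', hb]⟩
    · exact Or.inr ⟨ha, sup_le hb hb'⟩

lemma mem_pureTensor (a : A) (b : B) : (a, b) ∈ pureTensor a b :=
  Or.inr ⟨le_rfl, le_rfl⟩

lemma pureTensor_subset {a : A} {b : B} {K : Set (A × B)} (hK : IsBiIdeal K)
    (hab : (a, b) ∈ K) : pureTensor a b ⊆ K := by
  rintro ⟨x, y⟩ (h | ⟨hx, hy⟩)
  · exact nabla_subset hK h
  · exact hK.1 (Prod.mk_le_mk.mpr ⟨hx, hy⟩) hab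

lemma pureTensor_tensorElt (a : A) (b : B) : IsTensorElt (pureTensor a b) := by
  refine ⟨{(a, b)}, subset_antisymm ?_ ?_⟩
  · exact pureTensor_subset (biGen_isBiIdeal _) (subset_biGen _ (by simp))
  · exact biGen_subset (pureTensor_isBiIdeal a b) (by simp [mem_pureTensor])

lemma pureTensor_mono {a a' : A} {b b' : B} (ha : a ≤ a') (hb : b ≤ b') :
    pureTensor a b ⊆ pureTensor a' b' := by
  rintro ⟨x, y⟩ (h | ⟨hx, hy⟩)
  · exact Or.inl h
  · exact Or.inr ⟨le_trans hx ha, le_trans hy hb⟩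

end Aux

/-- The atoms of `A ⊗ B` (ordered by inclusion, with least element `∇`) are
exactly the pure tensors `a ⊗ b` with `a` an atom of `A` and `b` an atom of `B`. -/
theorem tensor_atoms {A B : Type*} [SemilatticeSup A] [OrderBot A]
    [SemilatticeSup B] [OrderBot B] (I : Set (A × B)) (hI : IsTensorElt I) :
    (I ≠ nabla A B ∧ ∀ J : Set (A × B), IsTensorElt J → J ⊂ I → J = nabla A B) ↔
      ∃ a : A, ∃ b : B, IsAtom a ∧ IsAtom b ∧ I = pureTensor a b := by
  obtain ⟨S, rfl⟩ := hI
  set I := biGen (↑S : Set (A × B)) with hIdef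
  have hIbi : IsBiIdeal I := biGen_isBiIdeal _
  constructor
  · rintro ⟨hne, hmin⟩
    have hns : nabla A B ⊂ I := (nabla_subset hIbi).ssubset_of_ne (Ne.symm hne)
    obtain ⟨⟨a, b⟩, hpI, hpn⟩ := Set.exists_of_ssubset hns
    have hab : a ≠ ⊥ ∧ b ≠ ⊥ := by
      by_contra h
      push_neg at h
      rcases Classical.em (a = ⊥) with h1 | h1
      · exact hpn (Or.inl h1)
      · exact hpn (Or.inr (h h1))
    have hPI : pureTensor a b ⊆ I := pureTensor_subset hIbi hpI
    have hPne : pureTensor a b ≠ nabla A B := by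
      intro h
      have := h ▸ mem_pureTensor a b
      exact hpn this
    have hPeq : pureTensor a b = I := by
      by_contra h
      exact hPne (hmin _ (pureTensor_tensorElt a b) (hPI.ssubset_of_ne h))
    refine ⟨a, b, ⟨hab.1, ?_⟩, ⟨hab.2, ?_⟩, hPeq.symm⟩
    · intro c hc
      by_contra hc0
      have hsub : pureTensor c b ⊂ pureTensor a b := by
        refine (pureTensor_mono hc.le le_rfl).ssubset_of_ne ?_
        intro h
        have := h ▸ mem_pureTensor a b
        rcases this with (h' | h') | ⟨h', _⟩
        · exact hab.1 h'
        · exact hab.2 h'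
        · exact absurd h' hc.not_ge
      have := hmin _ (pureTensor_tensorElt c b) (hPeq ▸ hsub)
      have hm := this ▸ mem_pureTensor c b
      rcases hm with h' | h'
      · exact hc0 h'
      · exact hab.2 h'
    · intro c hc
      by_contra hc0
      have hsub : pureTensor a c ⊂ pureTensor a b := by
        refine (pureTensor_mono le_rfl hc.le).ssubset_of_ne ?_
        intro h
        have := h ▸ mem_pureTensor a b
        rcases this with (h' | h') | ⟨_, h'⟩
        · exact hab.1 h'
        · exact hab.2 h'
        · exact absurd h' hc.not_ge
      have := hmin _ (pureTensor_tensorElt a c) (hPeq ▸ hsub)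
      have hm := this ▸ mem_pureTensor a c
      rcases hm with h' | h'
      · exact hab.1 h'
      · exact hc0 h'
  · rintro ⟨a, b, ha, hb, hIeq⟩
    constructor
    · intro h
      have := (hIeq ▸ h) ▸ mem_pureTensor a b
      rcases this with h' | h'
      · exact ha.1 h'
      · exact hb.1 h'
    · intro J hJT hJsub
      obtain ⟨T, rfl⟩ := hJT
      have hJbi : IsBiIdeal (biGen (↑T : Set (A × B))) := biGen_isBiIdeal _
      refine subset_antisymm ?_ (nabla_subset hJbi)
      rintro ⟨x, y⟩ hxy
      by_contra hn
      simp only [nabla, Set.mem_setOf_eq, not_or] at hn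
      have hmem : (x, y) ∈ pureTensor a b := hIeq ▸ hJsub.subset hxy
      have hxa : x ≤ a ∧ y ≤ b := by
        rcases hmem with (h' | h') | h'
        · exact absurd h' hn.1
        · exact absurd h' hn.2
        · exact h'
      have hxe : x = a := by
        rcases lt_or_eq_of_le hxa.1 with h' | h'
        · exact absurd (ha.2 x h') hn.1
        · exact h'
      have hye : y = b := by
        rcases lt_or_eq_of_le hxa.2 with h' | h'
        · exact absurd (hb.2 y h') hn.2
        · exact h'
      have habJ : (a, b) ∈ biGen (↑T : Set (A × B)) := hxe ▸ hye ▸ hxy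
      have : pureTensor a b ⊆ biGen (↑T : Set (A × B)) := pureTensor_subset hJbi habJ
      exact hJsub.2 (hIeq ▸ this)
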